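/- Let (p,p') be a pair of coprime positive integers with p ≥ 2, set a = p'/p, let ε,ε' ∈ {0,1}, and let r,s,θ be integers with 1 ≤ r ≤ p−1, 0 ≤ s ≤ p'−1, θ ∈ ℤ. Then, at every point (τ,u,t) ∈ ℍ×ℂ×ℂ at which both sides are defined, η(τ)³ ϑ_{ε,ε'}(u;τ)^{−1} · A^{ε,ε'}_{r,s;θ}(τ,u,t) = (−1)^{εε'+(1−ε')p'} w^{3(1−2a)} q^{(ar−s−p')(θ+(1−ε)/2) − a(θ+(1−ε)/2)²} z^{(ar−s−p')−2a(θ+(1−ε)/2)} · [ A_{2p'}( u_{ε,ε'}+θτ, (rp'−sp−pp')τ; pτ ) − q^{r(s+p')} A_{2p'}( u_{ε,ε'}+(θ−r)τ, (−rp'−sp−pp')τ; pτ ) ], where q^α = e^{2πiτα}, z^α = e^{2πiuα}, w^α = e^{2πitα}. -/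

import Mathlib

open Complex MeasureTheory
open scoped Real

noncomputable section

/-- `e2 x = exp(2πi x)`. -/
def e2 (x : ℂ) : ℂ := Complex.exp (2 * (π : ℂ) * Complex.I * x)

/-- Dedekind dedekindEta function. -/
def dedekindEta (τ : ℂ) : ℂ := e2 (τ / 24) * ∏' n : ℕ, (1 - e2 (τ * (n + 1)))

/-- Jacobi theta with characteristics ε, ε' ∈ {0,1}. -/
def theta (ε ε' : ℕ) (u τ : ℂ) : ℂ :=
  e2 (u * ε / 2) * e2 (τ * ε / 8) *
    ∏' n : ℕ,
      ((1 - e2 (τ * (n + 1))) *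
        (1 + (-1 : ℂ) ^ ε' * e2 u * e2 (τ * ((n + 1 : ℂ) - (1 - (ε : ℂ)) / 2))) *
        (1 + (-1 : ℂ) ^ ε' * e2 (-u) * e2 (τ * ((n + 1 : ℂ) - (1 + (ε : ℂ)) / 2))))

/-- Normalized BPZ minimal-series character. -/
def chiBPZ (p p' r s : ℤ) (τ : ℂ) : ℂ :=
  (dedekindEta τ)⁻¹ * ∑' n : ℤ,
    (e2 (τ * ((p * p' : ℂ) * ((n : ℂ) + ((r * p' - s * p : ℤ) : ℂ) / (2 * p * p')) ^ 2)) -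
     e2 (τ * ((p * p' : ℂ) * ((n : ℂ) + ((-r * p' - s * p : ℤ) : ℂ) / (2 * p * p')) ^ 2)))

/-- The typical character function T^{ε,ε'}_{r,s;x}(τ,u,t). -/
def Tchar (p p' : ℤ) (ε ε' : ℕ) (r s : ℤ) (x : ℂ) (τ u t : ℂ) : ℂ :=
  (-1 : ℂ) ^ (ε * ε') *
    e2 (τ * (((p' : ℂ) / p) * (x - Complex.I * ε / 2) ^ 2)) *
    e2 (u * (2 * Complex.I * ((p' : ℂ) / p) * (x - Complex.I * ε / 2))) *
    e2 (t * (3 * (1 - 2 * ((p' : ℂ) / p)))) *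
    theta ε ε' u τ / (dedekindEta τ) ^ 2 * chiBPZ p p' r s τ

/-- The index set K_{p,p'}. -/
def Kset (p p' : ℤ) : Finset (ℤ × ℤ) :=
  (Finset.Icc 1 (p - 1) ×ˢ Finset.Icc 1 (p' - 1)).filter
    (fun rs => rs.1 * p' + rs.2 * p ≤ p * p')

/-- BPZ modular S-matrix. -/
def SBPZ (p p' r s r' s' : ℤ) : ℂ :=
  (Real.sqrt (8 / ((p : ℝ) * p')) : ℂ) * (-1 : ℂ) ^ ((r + s) * (r' + s')) *
    (Real.sin (π * ((p : ℝ) - p') * r * r' / p) : ℂ) *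
    (Real.sin (π * ((p : ℝ) - p') * s * s' / p') : ℂ)

/-- Typical-typical modular S-data. -/
def Stt (p p' : ℤ) (ε ε' : ℕ) (r s : ℤ) (x : ℂ) (r' s' : ℤ) (x' : ℂ) : ℂ :=
  Complex.I ^ (-((ε : ℤ) * ε')) * SBPZ p p' r s r' s' *
    (Real.sqrt (2 * ((p' : ℝ) / p)) : ℂ) *
    Complex.exp (-4 * (π : ℂ) * Complex.I * ((p' : ℂ) / p) *
      (x - Complex.I * ε / 2) * (x' - Complex.I * ε' / 2))


/-- λ_{r,s} = (r−1)/2 − sp/(2p'). -/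
def lam (p p' r s : ℤ) : ℝ := ((r : ℝ) - 1) / 2 - (s : ℝ) * p / (2 * p')

/-- The meromorphic function Ψ_{p,p';r,s}(u;τ). -/
def Psi (p p' r s : ℤ) (u τ : ℂ) : ℂ :=
  ∑' n : ℤ,
    (e2 (τ * ((p * p' : ℂ) * ((n : ℂ) + ((r * p' - s * p : ℤ) : ℂ) / (2 * p * p')) ^ 2)) /
        (1 - e2 u * e2 (τ * ((p * n : ℤ) : ℂ))) -
      e2 (τ * ((p * p' : ℂ) * ((n : ℂ) + ((-r * p' - s * p : ℤ) : ℂ) / (2 * p * p')) ^ 2)) /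
        (1 - e2 u * e2 (τ * ((p * n - r : ℤ) : ℂ))))

/-- u_{ε,ε'} = u + ((1−ε)/2)τ + (1−ε')/2. -/
def uEps (ε ε' : ℕ) (u τ : ℂ) : ℂ := u + (1 - (ε : ℂ)) / 2 * τ + (1 - (ε' : ℂ)) / 2

/-- The predicate that Ψ_{p,p';r,s}(u;τ) is defined at (u,τ), i.e. (u,τ) avoids the
divisor D_{p,r} (none of the denominators vanish). -/
def PsiDefined (p r : ℤ) (u τ : ℂ) : Prop :=
  ∀ n : ℤ, e2 u * e2 (τ * ((p * n : ℤ) : ℂ)) ≠ 1 ∧ e2 u * e2 (τ * ((p * n - r : ℤ) : ℂ)) ≠ 1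

/-- The atypical character function A^{ε,ε'}_{r,s;θ}(τ,u,t). -/
def Achar (p p' : ℤ) (ε ε' : ℕ) (r s θ : ℤ) (τ u t : ℂ) : ℂ :=
  (-1 : ℂ) ^ (ε * ε') *
    e2 (τ * (-(((p' : ℂ) / p) * ((lam p p' r s : ℂ) - θ + ε / 2) ^ 2))) *
    e2 (u * (2 * ((p' : ℂ) / p) * ((lam p p' r s : ℂ) - θ + ε / 2))) *
    e2 (t * (3 * (1 - 2 * ((p' : ℂ) / p)))) *
    theta ε ε' u τ / (dedekindEta τ) ^ 3 * Psi p p' r s (uEps ε ε' u τ + θ * τ) τ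

/-- The set of discrete spectra 𝒮_{p,p'} (as a set of triples (r,s,θ)). -/
def SpectraSet (p p' : ℤ) : Set (ℤ × ℤ × ℤ) :=
  {x | 1 ≤ x.1 ∧ x.1 ≤ p - 1 ∧ 0 ≤ x.2.1 ∧ x.2.1 ≤ p' - 1 ∧
    ∃ m : ℤ, 0 ≤ m ∧ m ≤ p - 1 ∧
      2 * m + 2 * p' - p = 2 * (x.1 - 2 * x.2.2) * p' - (2 * x.2.1 + 1) * p}

/-- Atypical-atypical modular S-data. -/
def Saa (p p' : ℤ) (ε ε' : ℕ) (x y : ℤ × ℤ × ℤ) : ℂ :=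
  Complex.I ^ (-((ε : ℤ) * ε')) *
    (-1 : ℂ) ^ ((1 - (ε' : ℤ)) * x.2.1 + (1 - (ε : ℤ)) * y.2.1) * (2 / (p : ℂ)) *
    (Real.sin (π * ((p' : ℝ) / p) * x.1 * y.1) : ℂ) *
    Complex.exp ((π : ℂ) * Complex.I * ((p' : ℂ) / p) *
      ((x.1 : ℂ) - 2 * x.2.2 - 1 + ε) * ((y.1 : ℂ) - 2 * y.2.2 - 1 + ε'))

/-- Atypical-typical modular S-data. -/
def Sat (p p' : ℤ) (ε ε' : ℕ) (r s θ : ℤ) (r' s' : ℤ) (x : ℝ) : ℂ :=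
  Complex.I ^ (-((ε : ℤ) * ε')) * (-1 : ℂ) ^ (r' * s + r * s') * (2 / (p : ℂ)) *
    (Real.sin (π * ((p' : ℝ) / p) * r * r') : ℂ) *
    ((Real.sin (π * s * s' / ((p' : ℝ) / p)) * Real.exp (2 * π * x) +
        Real.sin (2 * π * lam p p' r' ((1 + s) * s')) : ℝ) : ℂ) /
    ((Real.cosh (2 * π * x) - Real.cos (2 * π * lam p p' r' s') : ℝ) : ℂ) *
    Complex.exp (-4 * (π : ℂ) * ((p' : ℂ) / p) * ((lam p p' r s : ℂ) - θ + ε / 2) *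
      ((x : ℂ) - Complex.I * ε' / 2))

/-- Level K Appell–Lerch sum. -/
def AL (K : ℤ) (u v τ : ℂ) : ℂ :=
  e2 (u * K / 2) * ∑' n : ℤ,
    (-1 : ℂ) ^ (K * n) * e2 (v * n) * e2 (τ * (K * (n : ℂ) * ((n : ℂ) + 1) / 2)) /
      (1 - e2 u * e2 (τ * n))

/-- The predicate that the Appell–Lerch sum with first argument u and modular
variable τ has no vanishing denominators. -/
def ALDefined (u τ : ℂ) : Prop := ∀ n : ℤ, e2 u * e2 (τ * n) ≠ 1


/-! ### Auxiliary lemmas -/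

open Filter
open scoped Topology

lemma e2_add (x y : ℂ) : e2 (x + y) = e2 x * e2 y := by
  rw [e2, e2, e2, ← Complex.exp_add]; ring_nf

lemma e2_ne_zero (x : ℂ) : e2 x ≠ 0 := Complex.exp_ne_zero _

lemma e2_int (n : ℤ) : e2 (n : ℂ) = 1 := by
  rw [e2, mul_comm, Complex.exp_int_mul, Complex.exp_two_pi_mul_I, one_zpow]

lemma e2_eq_e2 {x y : ℂ} (n : ℤ) (h : x = y + n) : e2 x = e2 y := by
  rw [h, e2_add, e2_int, mul_one]

lemma neg_one_zpow_e2 (n : ℤ) : (-1 : ℂ) ^ n = e2 ((n : ℂ) / 2) := by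
  have h : ((2:ℂ) * π * Complex.I * ((n:ℂ)/2)) = n * (π * Complex.I) := by ring
  rw [e2, h, Complex.exp_int_mul, Complex.exp_pi_mul_I]

lemma neg_one_pow_e2 (n : ℕ) : (-1 : ℂ) ^ n = e2 ((n : ℂ) / 2) := by
  have h := neg_one_zpow_e2 (n : ℤ)
  rw [zpow_natCast] at h
  rw [h]; norm_num

lemma norm_e2 (x : ℂ) : ‖e2 x‖ = Real.exp (-(2 * π * x.im)) := by
  rw [e2, Complex.norm_exp]
  congr 1
  simp [Complex.mul_re, Complex.mul_im]

lemma tendsto_exp_lin_zero (A B : ℝ) (hB : 0 < B) :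
    Tendsto (fun n : ℕ => Real.exp (A - B * n)) atTop (𝓝 0) := by
  have h : ∀ n : ℕ, Real.exp (A - B * n) = Real.exp A * Real.exp (-B) ^ n := by
    intro n
    rw [← Real.exp_nat_mul, ← Real.exp_add]
    ring_nf
  simp only [h]
  have h2 := (tendsto_pow_atTop_nhds_zero_of_lt_one (Real.exp_nonneg (-B))
    (Real.exp_lt_one_iff.mpr (by linarith))).const_mul (Real.exp A)
  simpa using h2

lemma tendsto_exp_lin_top (A B : ℝ) (hB : 0 < B) :
    Tendsto (fun n : ℕ => Real.exp (A + B * n)) atTop atTop := by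
  apply Real.tendsto_exp_atTop.comp
  apply tendsto_atTop_add_const_left
  exact Tendsto.const_mul_atTop hB tendsto_natCast_atTop_atTop

lemma norm_e2_pair (v T : ℂ) (K : ℤ) (m : ℤ) :
    ‖e2 (v * m) * e2 (T * ((K:ℂ) * m * ((m:ℂ) + 1) / 2))‖ =
      Real.exp (-(2 * π * (v.im * m + T.im * ((K:ℝ) * m * ((m:ℝ) + 1) / 2)))) := by
  rw [← e2_add, norm_e2]
  congr 2
  have h : (v * (m:ℂ) + T * ((K:ℂ) * m * ((m:ℂ) + 1) / 2)) =
      v * (((m:ℝ):ℂ)) + T * ((((K:ℝ) * m * ((m:ℝ) + 1) / 2 : ℝ)):ℂ) := by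
    push_cast; ring
  rw [h]
  simp [Complex.add_im, Complex.mul_im]

lemma norm_e2_den (U T : ℂ) (m : ℤ) :
    ‖e2 U * e2 (T * m)‖ = Real.exp (-(2 * π * (U.im + T.im * m))) := by
  rw [← e2_add, norm_e2]
  congr 2
  have h : (U + T * (m:ℂ)) = U + T * ((m:ℝ):ℂ) := by push_cast; ring
  rw [h]
  simp [Complex.add_im, Complex.mul_im]

lemma summable_aux (K : ℤ) (hK : 1 ≤ K) (U v T : ℂ) (hT : 0 < T.im) :
    Summable fun n : ℤ =>
      e2 (v * n) * e2 (T * ((K:ℂ) * n * ((n:ℂ) + 1) / 2)) / (1 - e2 U * e2 (T * n)) := by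
  have hπ : (0:ℝ) < π := Real.pi_pos
  have hK' : (1:ℝ) ≤ (K:ℝ) := by exact_mod_cast hK
  have hgeo : Summable (fun n : ℕ => 2 * Real.exp (-1:ℝ) ^ n) :=
    (summable_geometric_of_lt_one (Real.exp_nonneg _)
      (Real.exp_lt_one_iff.mpr (by norm_num))).mul_left 2
  have hexp1 : ∀ n : ℕ, Real.exp (-(n:ℝ)) = Real.exp (-1:ℝ) ^ n := by
    intro n
    rw [← Real.exp_nat_mul]
    norm_num
  apply Summable.of_nat_of_neg_add_one
  · -- positive direction
    apply Summable.of_norm_bounded_eventually_nat (g := fun n => 2 * Real.exp (-1:ℝ) ^ n) hgeo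
    have ev1 : ∀ᶠ n : ℕ in atTop,
        Real.exp (-(2 * π * U.im) - (2 * π * T.im) * n) ≤ 1/2 :=
      (tendsto_exp_lin_zero _ _ (by positivity)).eventually_le_const (by norm_num)
    have hlin : Tendsto (fun n : ℕ => (2 * π * v.im + π * T.im * (K:ℝ) - 1) +
        (π * T.im * (K:ℝ)) * n) atTop atTop :=
      tendsto_atTop_add_const_left _ _
        (Tendsto.const_mul_atTop (by positivity) tendsto_natCast_atTop_atTop)
    have ev2 : ∀ᶠ n : ℕ in atTop, (0:ℝ) ≤ (2 * π * v.im + π * T.im * (K:ℝ) - 1) +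
        (π * T.im * (K:ℝ)) * n := hlin.eventually_ge_atTop 0
    filter_upwards [ev1, ev2] with n h1 h2
    have hn0 : (0:ℝ) ≤ (n:ℝ) := Nat.cast_nonneg n
    have hD : (1:ℝ)/2 ≤ ‖1 - e2 U * e2 (T * ((n:ℤ):ℂ))‖ := by
      have h3 := norm_sub_norm_le (1 : ℂ) (e2 U * e2 (T * ((n:ℤ):ℂ)))
      rw [norm_one, norm_e2_den] at h3
      have harg : -(2 * π * (U.im + T.im * ((n:ℤ):ℝ))) =
          -(2 * π * U.im) - (2 * π * T.im) * n := by push_cast; ring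
      rw [harg] at h3
      linarith
    have hN : ‖e2 (v * ((n:ℤ):ℂ)) * e2 (T * ((K:ℂ) * ((n:ℤ):ℂ) * (((n:ℤ):ℂ) + 1) / 2))‖ ≤
        Real.exp (-(n:ℝ)) := by
      rw [norm_e2_pair]
      apply Real.exp_le_exp.mpr
      have hc : (0:ℝ) ≤ π * T.im * (K:ℝ) * ((n:ℝ) + 1) + 2 * π * v.im - 1 := by nlinarith
      push_cast
      nlinarith [mul_nonneg hn0 hc]
    calc ‖e2 (v * ((n:ℤ):ℂ)) * e2 (T * ((K:ℂ) * ((n:ℤ):ℂ) * (((n:ℤ):ℂ) + 1) / 2)) /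
            (1 - e2 U * e2 (T * ((n:ℤ):ℂ)))‖
        = ‖e2 (v * ((n:ℤ):ℂ)) * e2 (T * ((K:ℂ) * ((n:ℤ):ℂ) * (((n:ℤ):ℂ) + 1) / 2))‖ /
            ‖1 - e2 U * e2 (T * ((n:ℤ):ℂ))‖ := norm_div _ _
      _ ≤ Real.exp (-(n:ℝ)) / (1/2) :=
          div_le_div₀ (Real.exp_nonneg _) hN (by norm_num) hD
      _ = 2 * Real.exp (-1:ℝ) ^ n := by rw [← hexp1]; ring
  · -- negative direction
    apply Summable.of_norm_bounded_eventually_nat (g := fun n => 2 * Real.exp (-1:ℝ) ^ n) hgeo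
    have ev1 : ∀ᶠ n : ℕ in atTop, (2:ℝ) ≤
        Real.exp ((-(2 * π * U.im) + 2 * π * T.im) + (2 * π * T.im) * n) :=
      (tendsto_exp_lin_top _ _ (by positivity)).eventually_ge_atTop 2
    have hlin : Tendsto (fun n : ℕ => (-(2 * π * v.im) - 1) +
        (π * T.im * (K:ℝ)) * n) atTop atTop :=
      tendsto_atTop_add_const_left _ _
        (Tendsto.const_mul_atTop (by positivity) tendsto_natCast_atTop_atTop)
    have ev2 : ∀ᶠ n : ℕ in atTop, (0:ℝ) ≤ (-(2 * π * v.im) - 1) +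
        (π * T.im * (K:ℝ)) * n := hlin.eventually_ge_atTop 0
    filter_upwards [ev1, ev2] with n h1 h2
    have hn0 : (0:ℝ) ≤ (n:ℝ) := Nat.cast_nonneg n
    have hD : (1:ℝ) ≤ ‖1 - e2 U * e2 (T * ((-(↑n + 1) : ℤ):ℂ))‖ := by
      have h3 := norm_sub_norm_le (e2 U * e2 (T * ((-(↑n + 1) : ℤ):ℂ))) (1 : ℂ)
      rw [norm_one, norm_e2_den, ← norm_sub_rev] at h3
      have harg : -(2 * π * (U.im + T.im * ((-(↑n + 1) : ℤ):ℝ))) =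
          (-(2 * π * U.im) + 2 * π * T.im) + (2 * π * T.im) * n := by push_cast; ring
      rw [harg] at h3
      linarith
    have hN : ‖e2 (v * ((-(↑n + 1) : ℤ):ℂ)) *
        e2 (T * ((K:ℂ) * ((-(↑n + 1) : ℤ):ℂ) * (((-(↑n + 1) : ℤ):ℂ) + 1) / 2))‖ ≤
        Real.exp (-(n:ℝ)) := by
      rw [norm_e2_pair]
      apply Real.exp_le_exp.mpr
      push_cast
      nlinarith [mul_nonneg hn0 h2, h2]
    calc ‖e2 (v * ((-(↑n + 1) : ℤ):ℂ)) *
            e2 (T * ((K:ℂ) * ((-(↑n + 1) : ℤ):ℂ) * (((-(↑n + 1) : ℤ):ℂ) + 1) / 2)) /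
            (1 - e2 U * e2 (T * ((-(↑n + 1) : ℤ):ℂ)))‖
        = ‖e2 (v * ((-(↑n + 1) : ℤ):ℂ)) *
            e2 (T * ((K:ℂ) * ((-(↑n + 1) : ℤ):ℂ) * (((-(↑n + 1) : ℤ):ℂ) + 1) / 2))‖ /
            ‖1 - e2 U * e2 (T * ((-(↑n + 1) : ℤ):ℂ))‖ := norm_div _ _
      _ ≤ Real.exp (-(n:ℝ)) / 1 := div_le_div₀ (Real.exp_nonneg _) hN (by norm_num) hD
      _ ≤ 2 * Real.exp (-1:ℝ) ^ n := by
          rw [← hexp1, div_one]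
          nlinarith [Real.exp_nonneg (-(n:ℝ))]

lemma one_sub_e2_ne (x : ℂ) (hx : 0 < x.im) : 1 - e2 x ≠ 0 := by
  intro h
  have h1 : e2 x = 1 := by linear_combination -h
  have h2 := norm_e2 x
  rw [h1, norm_one] at h2
  have h3 : Real.exp (-(2 * π * x.im)) < 1 :=
    Real.exp_lt_one_iff.mpr (by nlinarith [Real.pi_pos])
  rw [← h2] at h3
  exact lt_irrefl _ h3

lemma tprod_eta_ne (τ : ℂ) (hτ : 0 < τ.im) : (∏' n : ℕ, (1 - e2 (τ * ((n : ℂ) + 1)))) ≠ 0 := by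
  have hπ := Real.pi_pos
  have him : ∀ n : ℕ, (τ * ((n : ℂ) + 1)).im = τ.im * ((n : ℝ) + 1) := by
    intro n
    have h : (τ * ((n : ℂ) + 1)) = τ * ((((n : ℝ) + 1 : ℝ)) : ℂ) := by push_cast; ring
    rw [h]
    simp [Complex.mul_im]
  have hfn : ∀ (x : Unit) (n : ℕ), (fun (n : ℕ) (_ : Unit) => 1 - e2 (τ * ((n : ℂ) + 1))) n x ≠ 0 := by
    intro _ n
    apply one_sub_e2_ne
    rw [him n]
    nlinarith [Nat.cast_nonneg (α := ℝ) n]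
  have hsum : ∀ (x : Unit), Summable fun n : ℕ =>
      Complex.log ((fun (n : ℕ) (_ : Unit) => 1 - e2 (τ * ((n : ℂ) + 1))) n x) := by
    intro _
    apply Summable.of_norm_bounded_eventually_nat
      (g := fun n => (3/2 * Real.exp (-(2 * π * τ.im))) * Real.exp (-(2 * π * τ.im)) ^ n)
      ((summable_geometric_of_lt_one (Real.exp_nonneg _)
        (Real.exp_lt_one_iff.mpr (by nlinarith))).mul_left _)
    have ev : ∀ᶠ n : ℕ in atTop,
        Real.exp (-(2 * π * τ.im) - (2 * π * τ.im) * n) ≤ 1 / 2 :=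
      (tendsto_exp_lin_zero _ _ (by nlinarith)).eventually_le_const (by norm_num)
    filter_upwards [ev] with n hn
    have hnorm : ‖e2 (τ * ((n : ℂ) + 1))‖ = Real.exp (-(2 * π * τ.im) - (2 * π * τ.im) * n) := by
      rw [norm_e2, him n]; ring_nf
    have h2 : ‖-e2 (τ * ((n : ℂ) + 1))‖ ≤ 1 / 2 := by rw [norm_neg, hnorm]; exact hn
    have h3 := Complex.norm_log_one_add_half_le_self h2
    rw [show (1 + -e2 (τ * ((n : ℂ) + 1))) = 1 - e2 (τ * ((n : ℂ) + 1)) by ring] at h3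
    rw [norm_neg, hnorm] at h3
    have hx : Real.exp (-(2 * π * τ.im) - (2 * π * τ.im) * n) =
        Real.exp (-(2 * π * τ.im)) * Real.exp (-(2 * π * τ.im)) ^ n := by
      rw [← Real.exp_nat_mul, ← Real.exp_add]; ring_nf
    calc ‖Complex.log (1 - e2 (τ * ((n : ℂ) + 1)))‖
        ≤ 3/2 * Real.exp (-(2 * π * τ.im) - (2 * π * τ.im) * n) := h3
      _ = (3/2 * Real.exp (-(2 * π * τ.im))) * Real.exp (-(2 * π * τ.im)) ^ n := by
          rw [hx]; ring
  have h := Complex.cexp_tsum_eq_tprod (hfn ()) (hsum ())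
  simp only [Function.comp] at h
  rw [← h]
  exact Complex.exp_ne_zero _

lemma AL_eq (p' : ℤ) (Ua V T : ℂ) :
    AL (2 * p') Ua V T = e2 (Ua * ((2 * p' : ℤ) : ℂ) / 2) *
      ∑' n : ℤ, e2 (V * n) * e2 (T * (((2 * p' : ℤ) : ℂ) * n * ((n : ℂ) + 1) / 2)) /
        (1 - e2 Ua * e2 (T * n)) := by
  rw [AL]
  congr 1
  apply tsum_congr
  intro n
  rw [show (2 * p' * n) = 2 * (p' * n) by ring, zpow_mul]
  norm_num

lemma Psi_eq (p p' r s : ℤ) (hp : 2 ≤ p) (hp' : 1 ≤ p') (U τ : ℂ) (hτ : 0 < τ.im) :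
    Psi p p' r s U τ =
      e2 (τ * (((p':ℂ)/p) * ((r:ℂ)/2 - (s:ℂ)*p/(2*p')) ^ 2)) *
        ∑' n : ℤ, e2 ((((r * p' - s * p - p * p' : ℤ) : ℂ) * τ) * n) *
          e2 (((p:ℂ) * τ) * (((2 * p' : ℤ) : ℂ) * n * ((n:ℂ) + 1) / 2)) /
          (1 - e2 U * e2 (((p:ℂ) * τ) * n)) -
      e2 (τ * (((p':ℂ)/p) * ((r:ℂ)/2 + (s:ℂ)*p/(2*p')) ^ 2)) *
        ∑' n : ℤ, e2 ((((-r * p' - s * p - p * p' : ℤ) : ℂ) * τ) * n) *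
          e2 (((p:ℂ) * τ) * (((2 * p' : ℤ) : ℂ) * n * ((n:ℂ) + 1) / 2)) /
          (1 - e2 (U - r * τ) * e2 (((p:ℂ) * τ) * n)) := by
  have hp0 : (p:ℂ) ≠ 0 := Int.cast_ne_zero.mpr (by omega)
  have hp'0 : (p':ℂ) ≠ 0 := Int.cast_ne_zero.mpr (by omega)
  have hT : 0 < ((p:ℂ) * τ).im := by
    have h : ((p:ℂ) * τ).im = (p:ℝ) * τ.im := by
      simp [Complex.mul_im]
    rw [h]
    have : (2:ℝ) ≤ (p:ℝ) := by exact_mod_cast hp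
    nlinarith
  have hSA := (summable_aux (2 * p') (by omega) U ((((r * p' - s * p - p * p' : ℤ) : ℂ)) * τ)
    ((p:ℂ) * τ) hT).mul_left (e2 (τ * (((p':ℂ)/p) * ((r:ℂ)/2 - (s:ℂ)*p/(2*p')) ^ 2)))
  have hSB := (summable_aux (2 * p') (by omega) (U - r * τ)
    ((((-r * p' - s * p - p * p' : ℤ) : ℂ)) * τ)
    ((p:ℂ) * τ) hT).mul_left (e2 (τ * (((p':ℂ)/p) * ((r:ℂ)/2 + (s:ℂ)*p/(2*p')) ^ 2)))
  have hterm : ∀ n : ℤ,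
      (e2 (τ * ((p * p' : ℂ) * ((n : ℂ) + ((r * p' - s * p : ℤ) : ℂ) / (2 * p * p')) ^ 2)) /
        (1 - e2 U * e2 (τ * ((p * n : ℤ) : ℂ))) -
      e2 (τ * ((p * p' : ℂ) * ((n : ℂ) + ((-r * p' - s * p : ℤ) : ℂ) / (2 * p * p')) ^ 2)) /
        (1 - e2 U * e2 (τ * ((p * n - r : ℤ) : ℂ)))) =
      e2 (τ * (((p':ℂ)/p) * ((r:ℂ)/2 - (s:ℂ)*p/(2*p')) ^ 2)) *
        (e2 ((((r * p' - s * p - p * p' : ℤ) : ℂ) * τ) * n) *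
          e2 (((p:ℂ) * τ) * (((2 * p' : ℤ) : ℂ) * n * ((n:ℂ) + 1) / 2)) /
          (1 - e2 U * e2 (((p:ℂ) * τ) * n))) -
      e2 (τ * (((p':ℂ)/p) * ((r:ℂ)/2 + (s:ℂ)*p/(2*p')) ^ 2)) *
        (e2 ((((-r * p' - s * p - p * p' : ℤ) : ℂ) * τ) * n) *
          e2 (((p:ℂ) * τ) * (((2 * p' : ℤ) : ℂ) * n * ((n:ℂ) + 1) / 2)) /
          (1 - e2 (U - r * τ) * e2 (((p:ℂ) * τ) * n))) := by
    intro n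
    have hd1 : e2 (τ * ((p * n : ℤ) : ℂ)) = e2 (((p:ℂ) * τ) * n) := by
      rw [show (τ * ((p * n : ℤ) : ℂ)) = ((p:ℂ) * τ) * n by push_cast; ring]
    have hd2 : e2 U * e2 (τ * ((p * n - r : ℤ) : ℂ)) =
        e2 (U - r * τ) * e2 (((p:ℂ) * τ) * n) := by
      rw [← e2_add, ← e2_add]
      congr 1
      push_cast
      ring
    have ha1 : ((p:ℂ) * p') * ((n : ℂ) + ((r:ℂ) * p' - s * p) / (2 * p * p')) ^ 2 =
        (p:ℂ) * p' * (n:ℂ) ^ 2 + ((r:ℂ) * p' - s * p) * n +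
          ((r:ℂ) * p' - s * p) ^ 2 / (4 * ((p:ℂ) * p')) := by
      field_simp
      ring
    have ha2 : ((p':ℂ)/p) * ((r:ℂ)/2 - (s:ℂ)*p/(2*p')) ^ 2 =
        ((r:ℂ) * p' - s * p) ^ 2 / (4 * ((p:ℂ) * p')) := by
      field_simp
      ring
    have hb1 : ((p:ℂ) * p') * ((n : ℂ) + (-(r:ℂ) * p' - s * p) / (2 * p * p')) ^ 2 =
        (p:ℂ) * p' * (n:ℂ) ^ 2 + (-(r:ℂ) * p' - s * p) * n +
          (-(r:ℂ) * p' - s * p) ^ 2 / (4 * ((p:ℂ) * p')) := by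
      field_simp
      ring
    have hb2 : ((p':ℂ)/p) * ((r:ℂ)/2 + (s:ℂ)*p/(2*p')) ^ 2 =
        (-(r:ℂ) * p' - s * p) ^ 2 / (4 * ((p:ℂ) * p')) := by
      field_simp
      ring
    have hn1 : e2 (τ * ((p * p' : ℂ) * ((n : ℂ) + ((r * p' - s * p : ℤ) : ℂ) / (2 * p * p')) ^ 2)) =
        e2 (τ * (((p':ℂ)/p) * ((r:ℂ)/2 - (s:ℂ)*p/(2*p')) ^ 2)) *
          (e2 ((((r * p' - s * p - p * p' : ℤ) : ℂ) * τ) * n) *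
           e2 (((p:ℂ) * τ) * (((2 * p' : ℤ) : ℂ) * n * ((n:ℂ) + 1) / 2))) := by
      rw [← e2_add, ← e2_add]
      congr 1
      push_cast
      linear_combination τ * ha1 - τ * ha2
    have hn2 : e2 (τ * ((p * p' : ℂ) * ((n : ℂ) + ((-r * p' - s * p : ℤ) : ℂ) / (2 * p * p')) ^ 2)) =
        e2 (τ * (((p':ℂ)/p) * ((r:ℂ)/2 + (s:ℂ)*p/(2*p')) ^ 2)) *
          (e2 ((((-r * p' - s * p - p * p' : ℤ) : ℂ) * τ) * n) *
           e2 (((p:ℂ) * τ) * (((2 * p' : ℤ) : ℂ) * n * ((n:ℂ) + 1) / 2))) := by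
      rw [← e2_add, ← e2_add]
      congr 1
      push_cast
      linear_combination τ * hb1 - τ * hb2
    rw [hn1, hn2, hd1, hd2]
    ring
  rw [Psi]
  rw [tsum_congr hterm]
  rw [Summable.tsum_sub hSA hSB, tsum_mul_left, tsum_mul_left]

private lemma assemble {CL cA cB CR d1 d2 d3 SA SB : ℂ}
    (h1 : CL * cA = CR * d1) (h2 : CL * cB = CR * (d2 * d3)) :
    CL * (cA * SA - cB * SB) = CR * (d1 * SA - d2 * (d3 * SB)) := by
  linear_combination SA * h1 - SB * h2

set_option maxHeartbeats 3200000 in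
/-- Expression of the atypical characters in terms of Appell–Lerch sums. -/
theorem atypical_via_appell_lerch (p p' : ℤ) (hp : 2 ≤ p) (hp' : 1 ≤ p')
    (hco : IsCoprime p p') (ε ε' : ℕ) (hε : ε ≤ 1) (hε' : ε' ≤ 1)
    (r s θ : ℤ) (hr1 : 1 ≤ r) (hr2 : r ≤ p - 1) (hs1 : 0 ≤ s) (hs2 : s ≤ p' - 1)
    (τ : ℂ) (hτ : 0 < τ.im) (u t : ℂ)
    (hθne : theta ε ε' u τ ≠ 0)
    (hdef : PsiDefined p r (uEps ε ε' u τ + θ * τ) τ)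
    (hdef1 : ALDefined (uEps ε ε' u τ + θ * τ) (p * τ))
    (hdef2 : ALDefined (uEps ε ε' u τ + (θ - r) * τ) (p * τ)) :
    dedekindEta τ ^ 3 * (theta ε ε' u τ)⁻¹ * Achar p p' ε ε' r s θ τ u t =
      (-1 : ℂ) ^ ((ε : ℤ) * ε' + (1 - (ε' : ℤ)) * p') *
        e2 (t * (3 * (1 - 2 * ((p' : ℂ) / p)))) *
        e2 (τ * ((((p' : ℂ) / p) * r - s - p') * ((θ : ℂ) + (1 - (ε : ℂ)) / 2) -
          ((p' : ℂ) / p) * ((θ : ℂ) + (1 - (ε : ℂ)) / 2) ^ 2)) *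
        e2 (u * ((((p' : ℂ) / p) * r - s - p') - 2 * ((p' : ℂ) / p) * ((θ : ℂ) + (1 - (ε : ℂ)) / 2))) *
        (AL (2 * p') (uEps ε ε' u τ + θ * τ) (((r * p' - s * p - p * p' : ℤ) : ℂ) * τ) (p * τ) -
          e2 (τ * ((r * (s + p') : ℤ) : ℂ)) *
            AL (2 * p') (uEps ε ε' u τ + (θ - r) * τ)
              (((-r * p' - s * p - p * p' : ℤ) : ℂ) * τ) (p * τ)) := by
  have hπ := Real.pi_pos
  have hp0 : (p : ℂ) ≠ 0 := Int.cast_ne_zero.mpr (by omega)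
  have hp'0 : (p' : ℂ) ≠ 0 := Int.cast_ne_zero.mpr (by omega)
  have hη : dedekindEta τ ≠ 0 := by
    rw [dedekindEta]
    exact mul_ne_zero (e2_ne_zero _) (tprod_eta_ne τ hτ)
  have key : dedekindEta τ ^ 3 * (theta ε ε' u τ)⁻¹ * Achar p p' ε ε' r s θ τ u t =
      (-1 : ℂ) ^ (ε * ε') *
        e2 (τ * (-(((p' : ℂ) / p) * ((lam p p' r s : ℂ) - θ + ε / 2) ^ 2))) *
        e2 (u * (2 * ((p' : ℂ) / p) * ((lam p p' r s : ℂ) - θ + ε / 2))) *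
        e2 (t * (3 * (1 - 2 * ((p' : ℂ) / p)))) *
        Psi p p' r s (uEps ε ε' u τ + θ * τ) τ := by
    rw [Achar]
    field_simp
  rw [key, Psi_eq p p' r s hp hp' (uEps ε ε' u τ + θ * τ) τ hτ,
    show uEps ε ε' u τ + ((θ : ℂ) - (r : ℂ)) * τ = uEps ε ε' u τ + (θ : ℂ) * τ - (r : ℂ) * τ
      by ring,
    AL_eq, AL_eq]
  refine assemble ?_ ?_
  · rw [neg_one_pow_e2, neg_one_zpow_e2]
    simp only [← e2_add]
    refine e2_eq_e2 ((ε' : ℤ) * p' - p') ?_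
    simp only [lam, uEps]
    push_cast
    have hrel : (p':ℂ)/p * ((s:ℂ)*p/(2*p')) = (s:ℂ)/2 := by
      field_simp
    linear_combination (-2*(τ*((θ:ℂ) + (1 - (ε:ℂ))/2) + u)) * hrel
  · rw [neg_one_pow_e2, neg_one_zpow_e2]
    simp only [← e2_add]
    refine e2_eq_e2 ((ε' : ℤ) * p' - p') ?_
    simp only [lam, uEps]
    push_cast
    have hrel : (p':ℂ)/p * ((s:ℂ)*p/(2*p')) = (s:ℂ)/2 := by
      field_simp
    linear_combination (2*τ*((r:ℂ) - ((θ:ℂ) + (1 - (ε:ℂ))/2)) - 2*u) * hrel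

end
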